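/- Let C be an isometric cycle in a graph with unique shortest paths, and let r be a vertex on C. Then there is a unique edge e = (u,v) on C such that C is the disjoint union of e, the shortest r-to-u path, and the shortest r-to-v path. -/

import Mathlib

open SimpleGraph

/-- The weight of a walk: sum of its edge weights. -/
def walkWeight {V : Type*} {G : SimpleGraph V} (w : Sym2 V → ℝ) {u v : V}
    (p : G.Walk u v) : ℝ :=
  (p.edges.map w).sum

/-- `p` is a shortest `u`-`v` path with respect to `w`. -/
def IsShortest {V : Type*} (G : SimpleGraph V) (w : Sym2 V → ℝ) {u v : V}
    (p : G.Walk u v) : Prop :=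
  p.IsPath ∧ ∀ q : G.Walk u v, q.IsPath → walkWeight w p ≤ walkWeight w q

/-- Shortest paths in `G` (w.r.t. `w`) are unique between every pair of vertices. -/
def UniqueShortestPaths {V : Type*} (G : SimpleGraph V) (w : Sym2 V → ℝ) : Prop :=
  ∀ (u v : V) (p q : G.Walk u v), IsShortest G w p → IsShortest G w q → p = q

/-- A cycle `c` is isometric: for any two vertices on `c`, some shortest path
between them in `G` is contained in `c`. -/
def IsIsometric {V : Type*} (G : SimpleGraph V) (w : Sym2 V → ℝ) {r : V}
    (c : G.Walk r r) : Prop :=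
  ∀ u v : V, u ∈ c.support → v ∈ c.support →
    ∃ p : G.Walk u v, IsShortest G w p ∧ ∀ e ∈ p.edges, e ∈ c.edges

section AuxWeight
variable {V : Type*} {G : SimpleGraph V} {w : Sym2 V → ℝ}

lemma walkWeight_append {u v x : V} (p : G.Walk u v) (q : G.Walk v x) :
    walkWeight w (p.append q) = walkWeight w p + walkWeight w q := by
  simp [walkWeight, Walk.edges_append]

lemma walkWeight_bypass_le [DecidableEq V] (hw : ∀ e, 0 < w e) {u v : V} (p : G.Walk u v) :
    walkWeight w p.bypass ≤ walkWeight w p := by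
  obtain ⟨l, hl, hsl⟩ := (p.bypass_isPath.edges_nodup.subperm (p.edges_bypass_subset))
  calc walkWeight w p.bypass = (l.map w).sum := by
        rw [walkWeight, (hl.map w).sum_eq]
    _ ≤ (p.edges.map w).sum := by
        refine (hsl.map w).sum_le_sum ?_
        intro a ha
        obtain ⟨e, -, rfl⟩ := List.mem_map.mp ha
        exact (hw e).le

/-- A prefix of a shortest path is shortest. -/
lemma IsShortest.of_append_left (hw : ∀ e, 0 < w e) {u v x : V}
    {p : G.Walk u v} {z : G.Walk v x} (hs : IsShortest G w (p.append z)) :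
    IsShortest G w p := by
  letI := Classical.decEq V
  refine ⟨hs.1.of_append_left, fun q hq => ?_⟩
  have h1 := hs.2 (q.append z).bypass (q.append z).bypass_isPath
  have h2 := walkWeight_bypass_le hw (q.append z)
  rw [walkWeight_append p z] at h1
  rw [walkWeight_append q z] at h2
  linarith

lemma isShortest_nil {r : V} :
    IsShortest G w (Walk.nil : G.Walk r r) := by
  refine ⟨Walk.IsPath.nil, fun q hq => ?_⟩
  rw [Walk.isPath_iff_eq_nil.mp hq]

end AuxWeight

section Struct
variable {V : Type*} {G : SimpleGraph V}

lemma prefix_eq_of_length {a x1 : V} (a1 : G.Walk a x1) :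
    ∀ {b x2 : V} (a2 : G.Walk a x2) (b1 : G.Walk x1 b) (b2 : G.Walk x2 b),
      a1.append b1 = a2.append b2 → a1.length = a2.length →
      (⟨x1, a1⟩ : Σ x, G.Walk a x) = ⟨x2, a2⟩ := by
  induction a1 with
  | nil =>
    intro b x2 a2 b1 b2 h hl
    cases a2 with
    | nil => rfl
    | cons d2 a2' => simp at hl
  | cons d a1' ih =>
    intro b x2 a2 b1 b2 h hl
    cases a2 with
    | nil => simp at hl
    | cons d2 a2' =>
      rw [Walk.cons_append, Walk.cons_append] at h
      injection h with h1 h2 h3 hp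
      subst h2
      have := ih a2' b1 b2 (eq_of_heq hp) (by simpa using hl)
      cases this
      rfl

lemma prefix_eq_of_support_nodup :
    ∀ {a v b : V} (q1 q2 : G.Walk a v) (z1 z2 : G.Walk v b),
      q1.append z1 = q2.append z2 → (q1.append z1).support.Nodup → q1 = q2 := by
  intro a v b q1
  induction q1 with
  | nil =>
    intro q2 z1 z2 h hn
    cases q2 with
    | nil => rfl
    | cons d2 q2' =>
      exfalso
      rw [Walk.nil_append] at h hn
      rw [h, Walk.cons_append, Walk.support_cons, List.nodup_cons] at hn
      exact hn.1 (by rw [Walk.mem_support_append_iff]; exact Or.inl q2'.end_mem_support)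
  | cons d q1' ih =>
    intro q2 z1 z2 h hn
    cases q2 with
    | nil =>
      exfalso
      rw [Walk.cons_append, Walk.support_cons, List.nodup_cons] at hn
      exact hn.1 (by rw [Walk.mem_support_append_iff]; exact Or.inl q1'.end_mem_support)
    | cons d2 q2' =>
      rw [Walk.cons_append, Walk.cons_append] at h
      injection h with h1 h2 h3 hp
      subst h2
      have hn' : (q1'.append z1).support.Nodup := by
        rw [Walk.cons_append, Walk.support_cons, List.nodup_cons] at hn
        exact hn.2
      rw [ih q2' z1 z2 (eq_of_heq hp) hn']

lemma prefix_eq_of_cycle_support {r v b : V} (hne : v ≠ r)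
    (q1 q2 : G.Walk r v) (z1 z2 : G.Walk v b)
    (h : q1.append z1 = q2.append z2) (hn : (q1.append z1).support.tail.Nodup) :
    q1 = q2 := by
  cases q1 with
  | nil => exact absurd rfl hne
  | cons d q1' =>
    cases q2 with
    | nil => exact absurd rfl hne
    | cons d2 q2' =>
      rw [Walk.cons_append, Walk.cons_append] at h
      injection h with h1 h2 h3 hp
      subst h2
      have hn' : (q1'.append z1).support.Nodup := by
        rwa [Walk.cons_append, Walk.support_cons, List.tail_cons] at hn
      rw [prefix_eq_of_support_nodup q1' q2' z1 z2 (eq_of_heq hp) hn']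

lemma first_edge_of_path {a b y : V} (q : G.Walk a b) (hq : q.IsPath) (d : G.Adj a y)
    (he : s(a, y) ∈ q.edges) : ∃ q' : G.Walk y b, q = Walk.cons d q' := by
  cases q with
  | nil => simp at he
  | cons dq q'' =>
    rw [Walk.edges_cons, List.mem_cons] at he
    rcases he with he | he
    · rw [Sym2.eq_iff] at he
      rcases he with ⟨-, rfl⟩ | ⟨h1, rfl⟩
      · exact ⟨q'', rfl⟩
      · exact absurd d G.irrefl
    · exfalso
      have := q''.fst_mem_support_of_mem_edges he
      rw [Walk.isPath_def, Walk.support_cons, List.nodup_cons] at hq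
      exact hq.1 this

lemma path_prefix_decomp :
    ∀ {a x : V} (p : G.Walk a x), p.IsPath → ∀ {b : V} (c' : G.Walk a b), c'.IsPath →
      (∀ e ∈ p.edges, e ∈ c'.edges) → ∃ t : G.Walk x b, c' = p.append t := by
  intro a x p
  induction p with
  | nil => exact fun _ b c' _ _ => ⟨c', (Walk.nil_append c').symm⟩
  | @cons a y x d p' ih =>
    intro hp b c' hc' hsub
    obtain ⟨q', rfl⟩ := first_edge_of_path c' hc' d (hsub _ (by simp))
    have hp' : p'.IsPath := hp.of_cons
    have hq' : q'.IsPath := hc'.of_cons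
    have hsub' : ∀ e ∈ p'.edges, e ∈ q'.edges := by
      intro e he
      have h1 : e ∈ (Walk.cons d q').edges :=
        hsub e (by rw [Walk.edges_cons]; exact List.mem_cons_of_mem _ he)
      rw [Walk.edges_cons, List.mem_cons] at h1
      rcases h1 with rfl | h1
      · exfalso
        have := p'.fst_mem_support_of_mem_edges he
        rw [Walk.isPath_def, Walk.support_cons, List.nodup_cons] at hp
        exact hp.1 this
      · exact h1
    obtain ⟨t, rfl⟩ := ih hp' q' hq' hsub'
    exact ⟨t, rfl⟩

lemma reverse_support_tail_nodup {r : V} (c : G.Walk r r)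
    (h : c.support.tail.Nodup) : c.reverse.support.tail.Nodup := by
  have hsup : c.support = r :: c.support.tail := c.support_eq_cons
  rcases ht : c.support.tail with _ | ⟨a, t0⟩
  · rw [Walk.support_reverse, hsup, ht]
    simp
  · rw [ht] at hsup h
    have h1 : c.support.getLast? = some r := by
      rw [List.getLast?_eq_getLast c.support_ne_nil]
      exact congrArg some c.getLast_support
    rw [hsup, List.getLast?_cons_cons] at h1
    rw [List.getLast?_eq_getLast (l := a :: t0) (by simp)] at h1
    have hlast : (a :: t0).getLast (by simp) = r := Option.some_injective _ h1
    have hdecomp : a :: t0 = (a :: t0).dropLast ++ [r] := by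
      conv_lhs => rw [← List.dropLast_append_getLast (l := a :: t0) (by simp)]
      rw [hlast]
    rw [Walk.support_reverse, hsup]
    have h2 : (r :: (a :: t0)).reverse = r :: ((a :: t0).dropLast.reverse ++ [r]) := by
      conv_lhs => rw [hdecomp]
      simp
    rw [h2, List.tail_cons]
    refine (List.Perm.nodup_iff ?_).mpr h
    have h3 : ((a :: t0).dropLast ++ [r]).Perm (a :: t0) := by rw [← hdecomp]
    exact (((a :: t0).dropLast.reverse_perm).append_right [r]).trans h3

lemma cycle_tail_path {r : V} {c : G.Walk r r} (hc : c.IsCycle) :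
    ∀ {wc : V} (dc : G.Adj r wc) (c'' : G.Walk wc r), c = Walk.cons dc c'' → c''.IsPath := by
  intro wc dc c'' heq
  rw [Walk.isPath_def]
  have := hc.support_nodup
  rwa [heq, Walk.support_cons, List.tail_cons] at this

lemma cycle_arc {r x : V} (c : G.Walk r r) (hc : c.IsCycle) (p : G.Walk r x) (hp : p.IsPath)
    (hsub : ∀ e ∈ p.edges, e ∈ c.edges) :
    (∃ t : G.Walk x r, c = p.append t) ∨ (∃ t : G.Walk x r, c.reverse = p.append t) := by
  cases p with
  | nil => exact .inl ⟨c, (Walk.nil_append c).symm⟩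
  | @cons _ y _ d p' =>
    have hey : s(r, y) ∈ c.edges := hsub _ (by simp)
    cases c with
    | nil => simp at hey
    | @cons _ wc _ dc c'' =>
      have hc''path := cycle_tail_path hc dc c'' rfl
      rw [Walk.edges_cons, List.mem_cons] at hey
      rcases hey with hey | hey
      · rw [Sym2.eq_iff] at hey
        rcases hey with ⟨-, rfl⟩ | ⟨h1, rfl⟩
        · have hsub' : ∀ e ∈ p'.edges, e ∈ c''.edges := by
            intro e he
            have h1 : e ∈ (Walk.cons dc c'').edges :=
              hsub e (by rw [Walk.edges_cons]; exact List.mem_cons_of_mem _ he)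
            rw [Walk.edges_cons, List.mem_cons] at h1
            rcases h1 with rfl | h1
            · exfalso
              have := p'.fst_mem_support_of_mem_edges he
              rw [Walk.isPath_def, Walk.support_cons, List.nodup_cons] at hp
              exact hp.1 this
            · exact h1
          obtain ⟨t, ht⟩ := path_prefix_decomp p' hp.of_cons c'' hc''path hsub'
          exact .inl ⟨t, by rw [ht, Walk.cons_append]⟩
        · exact absurd d G.irrefl
      · have hey' : s(r, y) ∈ c''.reverse.edges := by
          rw [Walk.edges_reverse, List.mem_reverse]; exact hey
        obtain ⟨q₂, hq₂⟩ := first_edge_of_path c''.reverse hc''path.reverse d hey'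
        have hcr : (Walk.cons dc c'').reverse
            = Walk.cons d (q₂.append (Walk.cons dc.symm Walk.nil)) := by
          rw [Walk.reverse_cons, hq₂, Walk.cons_append]
        have hWpath : (q₂.append (Walk.cons dc.symm Walk.nil)).IsPath := by
          have hn := reverse_support_tail_nodup _ hc.support_nodup
          rw [Walk.isPath_def]
          rwa [hcr, Walk.support_cons, List.tail_cons] at hn
        have hsub' : ∀ e ∈ p'.edges, e ∈ (q₂.append (Walk.cons dc.symm Walk.nil)).edges := by
          intro e he
          have h1 : e ∈ (Walk.cons dc c'').reverse.edges := by
            rw [Walk.edges_reverse, List.mem_reverse]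
            exact hsub e (by rw [Walk.edges_cons]; exact List.mem_cons_of_mem _ he)
          rw [hcr, Walk.edges_cons, List.mem_cons] at h1
          rcases h1 with rfl | h1
          · exfalso
            have := p'.fst_mem_support_of_mem_edges he
            rw [Walk.isPath_def, Walk.support_cons, List.nodup_cons] at hp
            exact hp.1 this
          · exact h1
        obtain ⟨t, ht⟩ := path_prefix_decomp p' hp.of_cons _ hWpath hsub'
        exact .inr ⟨t, by rw [hcr, ht, Walk.cons_append]⟩

end Struct

/-- `SPdef G w c j`: the prefix of `c` of length `j` exists and is a shortest path. -/
def SPdef {V : Type*} (G : SimpleGraph V) (w : Sym2 V → ℝ) {r : V} (c : G.Walk r r)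
    (j : ℕ) : Prop :=
  ∃ (x : V) (pp : G.Walk r x) (z : G.Walk x r),
    c = pp.append z ∧ IsShortest G w pp ∧ pp.length = j

section SP
variable {V : Type*} {G : SimpleGraph V} {w : Sym2 V → ℝ}

lemma SPdef_of_succ (hw : ∀ e, 0 < w e) {r : V} {c : G.Walk r r} {j : ℕ}
    (h : SPdef G w c (j + 1)) : SPdef G w c j := by
  obtain ⟨x, pp, z, hdec, hsh, hlen⟩ := h
  cases pp with
  | nil => simp at hlen
  | cons d pp' =>
    obtain ⟨y, q, h', hq⟩ := Walk.exists_cons_eq_concat d pp'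
    refine ⟨y, q, (Walk.cons h' Walk.nil).append z, ?_, ?_, ?_⟩
    · rw [hdec, hq, Walk.concat_eq_append, Walk.append_assoc]
    · refine IsShortest.of_append_left hw (z := Walk.cons h' Walk.nil) ?_
      rw [← Walk.concat_eq_append, ← hq]
      exact hsh
    · have h2 := congrArg Walk.length hq
      rw [Walk.length_concat] at h2
      omega

lemma SPdef_mono (hw : ∀ e, 0 < w e) {r : V} {c : G.Walk r r} {i j : ℕ}
    (hij : i ≤ j) (h : SPdef G w c j) : SPdef G w c i := by
  induction j with
  | zero => simpa [Nat.le_zero.mp hij] using h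
  | succ m ih =>
    rcases Nat.lt_or_ge i (m + 1) with h1 | h1
    · exact ih (by omega) (SPdef_of_succ hw h)
    · have : i = m + 1 := by omega
      subst this
      exact h

end SP
section Key
variable {V : Type*} {G : SimpleGraph V} {w : Sym2 V → ℝ}

lemma key_index {huniq : UniqueShortestPaths G w}
    {r : V} {c : G.Walk r r} (hc : c.IsCycle)
    {u2 v2 : V} {p2 : G.Walk r u2} {q2 : G.Walk r v2} {e2 : Sym2 V}
    (hp2 : IsShortest G w p2) (hq2 : IsShortest G w q2)
    (he2 : e2 = s(u2, v2))
    (hperm : c.edges.Perm (e2 :: (p2.edges ++ q2.edges)))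
    {t2 : G.Walk u2 r} (hdec : c = p2.append t2)
    {z2 : G.Walk v2 r} (hdecr : c.reverse = q2.append z2) :
    SPdef G w c p2.length ∧ ¬ SPdef G w c (p2.length + 1) ∧
      c.edges[p2.length]? = some e2 := by
  have hnodup : c.edges.Nodup := hc.isCircuit.isTrail.edges_nodup
  have hnodup2 : (e2 :: (p2.edges ++ q2.edges)).Nodup := (hperm.nodup_iff).mp hnodup
  have hlenperm : c.edges.length = (e2 :: (p2.edges ++ q2.edges)).length := hperm.length_eq
  have hle : c.length = p2.length + q2.length + 1 := by
    simp [Walk.length_edges, List.length_append] at hlenperm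
    omega
  have hlt2 : t2.length = q2.length + 1 := by
    have h0 := congrArg Walk.length hdec
    rw [Walk.length_append] at h0
    omega
  cases t2 with
  | nil => simp at hlt2
  | @cons _ xj _ dj tj =>
    have hrev : c.reverse = tj.reverse.append ((Walk.cons dj.symm Walk.nil).append p2.reverse) := by
      rw [hdec, Walk.reverse_append, Walk.reverse_cons, Walk.append_assoc]
    have hsig := prefix_eq_of_length q2 tj.reverse z2 _ (hdecr.symm.trans hrev) (by
      rw [Walk.length_reverse]
      rw [Walk.length_cons] at hlt2
      omega)
    obtain ⟨h1, h2⟩ := Sigma.ext_iff.mp hsig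
    subst h1
    have hq2tj : q2 = tj.reverse := eq_of_heq h2
    refine ⟨⟨u2, p2, Walk.cons dj tj, hdec, hp2, rfl⟩, ?_, ?_⟩
    · rintro ⟨x3, pp, z3, hdec3, hsh3, hlen3⟩
      have hceq : pp.append z3 = (p2.append (Walk.cons dj Walk.nil)).append tj := by
        rw [← hdec3, hdec, ← Walk.append_assoc]
        simp
      have hsig2 := prefix_eq_of_length pp (p2.append (Walk.cons dj Walk.nil)) z3 tj
        hceq (by simp [hlen3])
      obtain ⟨h3, h4⟩ := Sigma.ext_iff.mp hsig2
      subst h3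
      have hppeq : pp = p2.append (Walk.cons dj Walk.nil) := eq_of_heq h4
      have hppq2 : pp = q2 := huniq r _ pp q2 hsh3 hq2
      have he2in : e2 ∈ pp.edges := by
        rw [hppeq, Walk.edges_append, Walk.edges_cons]
        simp [he2]
      rw [hppq2] at he2in
      rw [List.nodup_cons] at hnodup2
      exact hnodup2.1 (List.mem_append.mpr (Or.inr he2in))
    · rw [hdec, Walk.edges_append, Walk.edges_cons]
      rw [List.getElem?_append_right (by simp [Walk.length_edges])]
      simp [Walk.length_edges, he2]

lemma key_index_any (huniq : UniqueShortestPaths G w)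
    {r : V} {c : G.Walk r r} (hc : c.IsCycle)
    {u2 v2 : V} {p2 : G.Walk r u2} {q2 : G.Walk r v2} {e2 : Sym2 V}
    (hp2 : IsShortest G w p2) (hq2 : IsShortest G w q2)
    (he2 : e2 = s(u2, v2))
    (hperm : c.edges.Perm (e2 :: (p2.edges ++ q2.edges)))
    (hp2pre : (∃ t : G.Walk u2 r, c = p2.append t) ∨ (∃ t : G.Walk u2 r, c.reverse = p2.append t))
    (hq2pre : (∃ t : G.Walk v2 r, c = q2.append t) ∨ (∃ t : G.Walk v2 r, c.reverse = q2.append t)) :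
    ∃ j, SPdef G w c j ∧ ¬ SPdef G w c (j + 1) ∧ c.edges[j]? = some e2 := by
  have hnodup : c.edges.Nodup := hc.isCircuit.isTrail.edges_nodup
  have hnodup2 : (e2 :: (p2.edges ++ q2.edges)).Nodup := (hperm.nodup_iff).mp hnodup
  have hdisj : List.Disjoint p2.edges q2.edges :=
    (List.nodup_append'.mp (List.nodup_cons.mp hnodup2).2).2.2
  have he2' : e2 = s(v2, u2) := he2.trans (Sym2.eq_swap)
  have hperm' : c.edges.Perm (e2 :: (q2.edges ++ p2.edges)) :=
    hperm.trans ((List.perm_append_comm).cons e2)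
  rcases hp2pre with ⟨t3, ht3⟩ | ⟨t3, ht3⟩ <;> rcases hq2pre with ⟨z3, hz3⟩ | ⟨z3, hz3⟩
  · -- both prefixes of c
    cases q2 with
    | nil =>
      exact ⟨p2.length, key_index (huniq := huniq) hc hp2 hq2 he2 hperm ht3
        ((Walk.nil_append c.reverse).symm)⟩
    | @cons _ m2 _ d2 q2' =>
      cases p2 with
      | nil =>
        exact ⟨(Walk.cons d2 q2').length, key_index (huniq := huniq) hc hq2 hp2 he2' hperm' hz3
          ((Walk.nil_append c.reverse).symm)⟩
      | @cons _ m1 _ d1 p2' =>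
        exfalso
        have h := ht3.symm.trans hz3
        rw [Walk.cons_append, Walk.cons_append] at h
        injection h with h1 h2 h3 hp
        subst h2
        exact hdisj (a := s(r, m1)) (by simp) (by simp)
  · exact ⟨p2.length, key_index (huniq := huniq) hc hp2 hq2 he2 hperm ht3 hz3⟩
  · exact ⟨q2.length, key_index (huniq := huniq) hc hq2 hp2 he2' hperm' hz3 ht3⟩
  · -- both prefixes of c.reverse
    cases q2 with
    | nil =>
      exact ⟨0, key_index (huniq := huniq) hc hq2 hp2 he2' hperm'
        ((Walk.nil_append c).symm) ht3⟩
    | @cons _ m2 _ d2 q2' =>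
      cases p2 with
      | nil =>
        exact ⟨0, key_index (huniq := huniq) hc hp2 hq2 he2 hperm
          ((Walk.nil_append c).symm) hz3⟩
      | @cons _ m1 _ d1 p2' =>
        exfalso
        have h := ht3.symm.trans hz3
        rw [Walk.cons_append, Walk.cons_append] at h
        injection h with h1 h2 h3 hp
        subst h2
        exact hdisj (a := s(r, m1)) (by simp) (by simp)

end Key

/-- Let `C` be an isometric cycle in a graph with positive edge weights and unique
shortest paths, and let `r` be a vertex on `C`.  Then there is a unique edge
`e = (u,v)` on `C` such that `C` is the disjoint union of `e`, the shortest `r`-to-`u`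
path, and the shortest `r`-to-`v` path (as a multiset of edges, `C` consists exactly
of `e` together with the edges of the two shortest paths). -/
theorem isometric_cycle_shortest_path_cover
    {V : Type*} (G : SimpleGraph V) (w : Sym2 V → ℝ)
    (hw : ∀ e, 0 < w e)
    (huniq : UniqueShortestPaths G w)
    {r : V} (c : G.Walk r r) (hc : c.IsCycle) (hiso : IsIsometric G w c)
    (hr : r ∈ c.support) :
    ∃! e : Sym2 V, e ∈ c.edges ∧
      ∃ (u v : V) (p : G.Walk r u) (q : G.Walk r v),
        e = s(u, v) ∧ u ∈ c.support ∧ v ∈ c.support ∧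
        IsShortest G w p ∧ IsShortest G w q ∧
        c.edges.Perm (e :: (p.edges ++ q.edges)) := by
  classical
  have hSP0 : SPdef G w c 0 := ⟨r, Walk.nil, c, (Walk.nil_append c).symm, isShortest_nil, rfl⟩
  set k := Nat.findGreatest (SPdef G w c) c.length with hk
  have hSPk : SPdef G w c k := Nat.findGreatest_spec (Nat.zero_le _) hSP0
  have hkmax : ∀ m, k < m → m ≤ c.length → ¬ SPdef G w c m :=
    fun m h1 h2 => Nat.findGreatest_is_greatest h1 h2
  obtain ⟨u, p, t, hdec, hpsh, hplen⟩ := hSPk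
  cases t with
  | nil =>
    exfalso
    rw [Walk.append_nil] at hdec
    have : c.IsPath := hdec ▸ hpsh.1
    exact hc.ne_nil (Walk.isPath_iff_eq_nil.mp this)
  | @cons _ v _ d t' =>
    have hctail : c.support.tail = p.support.tail ++ t'.support := by
      rw [hdec, Walk.tail_support_append, Walk.support_cons, List.tail_cons]
    have ht'nodup : t'.support.Nodup := by
      have h0 := hc.support_nodup
      rw [hctail] at h0
      exact h0.of_append_right
    have ht'path : t'.IsPath := (Walk.isPath_def t').mpr ht'nodup
    have hrev : c.reverse = t'.reverse.append ((Walk.cons d.symm Walk.nil).append p.reverse) := by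
      rw [hdec, Walk.reverse_append, Walk.reverse_cons, Walk.append_assoc]
    have hlen : c.length = p.length + t'.length + 1 := by
      have h0 := congrArg Walk.length hdec
      rw [Walk.length_append, Walk.length_cons] at h0
      omega
    have hvsup : v ∈ c.support := by
      rw [c.support_eq_cons, List.mem_cons]
      right
      rw [hctail]
      exact List.mem_append_right _ t'.start_mem_support
    have hqsh : IsShortest G w t'.reverse := by
      by_cases hvr : v = r
      · subst hvr
        have h0 : t' = Walk.nil := Walk.isPath_iff_eq_nil.mp ht'path
        rw [h0, Walk.reverse_nil]
        exact isShortest_nil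
      · obtain ⟨s, hs, hsub⟩ := hiso r v c.start_mem_support hvsup
        rcases cycle_arc c hc s hs.1 hsub with ⟨t2, ht2⟩ | ⟨t2, ht2⟩
        · exfalso
          have heqpre : s.append t2 = (p.append (Walk.cons d Walk.nil)).append t' := by
            rw [← ht2, hdec, ← Walk.append_assoc]
            simp
          have heq : s = p.append (Walk.cons d Walk.nil) :=
            prefix_eq_of_cycle_support hvr s _ t2 t' heqpre
              (by rw [← ht2]; exact hc.support_nodup)
          have hSP : SPdef G w c (k + 1) :=
            ⟨v, s, t2, ht2, hs, by rw [heq]; simp [hplen]⟩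
          exact hkmax (k + 1) (Nat.lt_succ_self k) (by omega) hSP
        · have heqpre : s.append t2
              = t'.reverse.append ((Walk.cons d.symm Walk.nil).append p.reverse) :=
            ht2.symm.trans hrev
          have heq : s = t'.reverse :=
            prefix_eq_of_cycle_support hvr s t'.reverse t2 _ heqpre
              (by rw [← ht2]; exact reverse_support_tail_nodup c hc.support_nodup)
          rw [← heq]
          exact hs
    have hedges : c.edges = p.edges ++ (s(u, v) :: t'.edges) := by
      rw [hdec, Walk.edges_append, Walk.edges_cons]
    have hperm : c.edges.Perm (s(u, v) :: (p.edges ++ t'.reverse.edges)) := by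
      rw [hedges, Walk.edges_reverse]
      refine List.perm_middle.trans ?_
      exact ((((t'.edges.reverse_perm).symm).append_left p.edges).cons _)
    have hme := key_index (huniq := huniq) hc hpsh hqsh rfl hperm hdec hrev
    rw [hplen] at hme
    refine ⟨s(u, v), ⟨?_, u, v, p, t'.reverse, rfl, ?_, ?_, hpsh, hqsh, hperm⟩, ?_⟩
    · rw [hedges]
      exact List.mem_append_right _ List.mem_cons_self
    · rw [hdec, Walk.mem_support_append_iff]
      exact Or.inl p.end_mem_support
    · exact hvsup
    · rintro e2 ⟨he2mem, u2, v2, p2, q2, he2, hu2, hv2, hp2, hq2, hperm2⟩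
      have hsubp2 : ∀ x ∈ p2.edges, x ∈ c.edges :=
        fun x hx => hperm2.mem_iff.mpr (by simp [hx])
      have hsubq2 : ∀ x ∈ q2.edges, x ∈ c.edges :=
        fun x hx => hperm2.mem_iff.mpr (by simp [hx])
      obtain ⟨j, hj1, hj2, hj3⟩ := key_index_any huniq hc hp2 hq2 he2 hperm2
        (cycle_arc c hc p2 hp2.1 hsubp2) (cycle_arc c hc q2 hq2.1 hsubq2)
      have hjk : j = k := by
        by_contra hne
        rcases Nat.lt_or_ge j k with h1 | h1
        · exact hj2 (SPdef_mono hw (by omega) hme.1)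
        · exact hme.2.1 (SPdef_mono hw (by omega) hj1)
      rw [hjk, hme.2.2] at hj3
      exact (Option.some_injective _ hj3).symm
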